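/- arXiv:2112.00292 — 3 statements merged into one kernel-verified Lean document; each statement's English description precedes it below -/
import Mathlib

section
/- Asymptotics of the elliptic steady state (Theorem Appendix): Fix h > 0 and ε ∈ (0,h). For all sufficiently large a > 0, the boundary value problem -u'' = u(a - u) on (0,h), u'(0) = 0, u(h) = 0 admits a (unique) positive spatially inhomogeneous solution û, and û can be written as û(x) = a - g_a(x) on [0, h-ε], where g_a(x) ≥ 0 and g_a(x)/a → 0 as a → ∞ uniformly for x ∈ [0, h-ε]. Equivalently: for every δ > 0 there is A such that for all a > A there exists a positive solution û of the boundary value problem with |û(x)/a - 1| < δ for all x ∈ [0, h-ε]. -/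
set_option maxHeartbeats 1000000
open Real Set

namespace ESS
noncomputable section

def mf (a u : ℝ) : ℝ := max 0 (min u a)
def Gf (a u : ℝ) : ℝ := mf a u * (mf a u - a)
def Pb (a h : ℝ) : ℝ := a^2 * (h+1)
def cl (P p : ℝ) : ℝ := max (-P) (min p P)
def Vf (a h : ℝ) (z : ℝ × ℝ) : ℝ × ℝ := (cl (Pb a h) z.2, Gf a z.1)
def Fa (a s : ℝ) : ℝ := a * s^2/2 - s^3/3

lemma mf_nonneg (a u : ℝ) : 0 ≤ mf a u := le_max_left _ _
lemma mf_le (ha : 0 ≤ a) (u : ℝ) : mf a u ≤ a := max_le ha (min_le_right _ _)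
lemma mf_eq {a u : ℝ} (h0 : 0 ≤ u) (h1 : u ≤ a) : mf a u = u := by
  simp [mf, min_eq_left h1, max_eq_right h0]
lemma mf_zero {a u : ℝ} (hu : u ≤ 0) (ha : 0 ≤ a) : mf a u = 0 := by
  simp [mf, min_eq_left (hu.trans ha), max_eq_left hu]
lemma Gf_nonpos (ha : 0 ≤ a) (u : ℝ) : Gf a u ≤ 0 :=
  mul_nonpos_of_nonneg_of_nonpos (mf_nonneg a u) (by linarith [mf_le ha u])
lemma Gf_ge (ha : 0 ≤ a) (u : ℝ) : -(a^2/4) ≤ Gf a u := by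
  have h1 := mf_nonneg a u; have h2 := mf_le ha u
  unfold Gf; nlinarith [sq_nonneg (mf a u - a/2)]
lemma Gf_eq {a u : ℝ} (h0 : 0 ≤ u) (h1 : u ≤ a) : Gf a u = u * (u - a) := by
  rw [Gf, mf_eq h0 h1]
lemma Gf_zero {a u : ℝ} (hu : u ≤ 0) (ha : 0 ≤ a) : Gf a u = 0 := by
  rw [Gf, mf_zero hu ha, zero_mul]
lemma cl_eq {P p : ℝ} (h1 : -P ≤ p) (h2 : p ≤ P) : cl P p = p := by
  simp [cl, min_eq_left h2, max_eq_right h1]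
lemma cl_abs_le {P : ℝ} (hP : 0 ≤ P) (p : ℝ) : |cl P p| ≤ P := by
  rw [abs_le]; constructor
  · simpa [cl] using le_max_left _ _
  · exact max_le (by linarith) (min_le_right _ _)
lemma mf_lip (a u v : ℝ) : |mf a u - mf a v| ≤ |u - v| := by
  have h1 : |min u a - min v a| ≤ |u - v| := abs_min_sub_min_le_max _ _ _ _ |>.trans (by simp)
  calc |mf a u - mf a v| ≤ |min u a - min v a| := by
        simpa [mf, max_comm] using abs_max_sub_max_le_abs (min u a) (min v a) 0
    _ ≤ |u - v| := h1
lemma cl_lip (P p q : ℝ) : |cl P p - cl P q| ≤ |p - q| := by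
  have h1 : |min p P - min q P| ≤ |p - q| := by
    simpa using abs_min_sub_min_le_max p P q P |>.trans (by simp)
  calc |cl P p - cl P q| ≤ |min p P - min q P| := by
        simpa [cl, max_comm] using abs_max_sub_max_le_abs (min p P) (min q P) (-P)
    _ ≤ |p - q| := h1
lemma Gf_lip (ha : 0 ≤ a) (u v : ℝ) : |Gf a u - Gf a v| ≤ a * |u - v| := by
  have h1 := mf_nonneg a u; have h2 := mf_le ha u
  have h3 := mf_nonneg a v; have h4 := mf_le ha v
  have h5 := mf_lip a u v
  have key : Gf a u - Gf a v = (mf a u - mf a v) * (mf a u + mf a v - a) := by unfold Gf; ring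
  rw [key, abs_mul]
  have h6 : |mf a u + mf a v - a| ≤ a := by rw [abs_le]; constructor <;> linarith
  calc |mf a u - mf a v| * |mf a u + mf a v - a| ≤ |u - v| * a := by
        exact mul_le_mul h5 h6 (abs_nonneg _) (abs_nonneg _)
    _ = a * |u - v| := mul_comm _ _

variable {a h : ℝ}

lemma Pb_nonneg (ha : 0 ≤ a) (hh : 0 ≤ h) : 0 ≤ Pb a h := by
  unfold Pb; positivity

lemma Vf_lip (ha : 0 ≤ a) : LipschitzWith (Real.toNNReal (max 1 a)) (Vf a h) := by
  apply LipschitzWith.of_dist_le_mul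
  intro z w
  have hK : (Real.toNNReal (max 1 a) : ℝ) = max 1 a := Real.coe_toNNReal _ (le_max_of_le_left zero_le_one)
  rw [hK, Prod.dist_eq, Prod.dist_eq]
  have h1 : dist (Vf a h z).1 (Vf a h w).1 ≤ dist z.2 w.2 := by
    simpa [Vf, Real.dist_eq] using cl_lip (Pb a h) z.2 w.2
  have h2 : dist (Vf a h z).2 (Vf a h w).2 ≤ a * dist z.1 w.1 := by
    simpa [Vf, Real.dist_eq] using Gf_lip ha z.1 w.1
  have hm : (0:ℝ) ≤ max 1 a := le_max_of_le_left zero_le_one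
  apply max_le
  · calc dist (Vf a h z).1 (Vf a h w).1 ≤ dist z.2 w.2 := h1
      _ ≤ max 1 a * max (dist z.1 w.1) (dist z.2 w.2) := by
          nlinarith [le_max_right (dist z.1 w.1) (dist z.2 w.2), dist_nonneg (x := z.2) (y := w.2),
            le_max_left (1:ℝ) a, le_max_right (dist z.1 w.1) (dist z.2 w.2)]
  · calc dist (Vf a h z).2 (Vf a h w).2 ≤ a * dist z.1 w.1 := h2
      _ ≤ max 1 a * max (dist z.1 w.1) (dist z.2 w.2) := by
          apply mul_le_mul (le_max_right _ _) (le_max_left _ _) dist_nonneg hm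

lemma Vf_norm_le (ha : 0 ≤ a) (hh : 0 ≤ h) (z : ℝ × ℝ) : ‖Vf a h z‖ ≤ Pb a h := by
  rw [Prod.norm_def]
  apply max_le
  · simpa [Vf, Real.norm_eq_abs] using cl_abs_le (Pb_nonneg ha hh) z.2
  · have h1 := Gf_nonpos ha z.1
    have h2 := Gf_ge ha z.1
    have : |Gf a z.1| ≤ a^2/4 := abs_le.2 ⟨by linarith, by linarith [sq_nonneg a]⟩
    refine this.trans ?_
    unfold Pb; nlinarith [sq_nonneg a]

lemma exists_sol (ha : 0 < a) (hh : 0 < h) (c : ℝ) :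
    ∃ X : ℝ → ℝ × ℝ, X 0 = (c, 0) ∧
      ∀ t ∈ Icc (-1:ℝ) (h+1), HasDerivWithinAt X (Vf a h (X t)) (Icc (-1) (h+1)) t := by
  have hpl : IsPicardLindelof (fun _ z => Vf a h z) (tmin := -1) (tmax := h+1)
      ⟨0, by constructor <;> linarith⟩ ((c,0) : ℝ × ℝ)
      (Real.toNNReal (Pb a h * (h+2))) 0 (Real.toNNReal (Pb a h)) (Real.toNNReal (max 1 a)) := by
    have hP := Pb_nonneg ha.le hh.le
    constructor
    · intro t _; exact (Vf_lip ha.le).lipschitzOnWith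
    · intro x _; exact continuousOn_const
    · intro t _ x _; rw [Real.coe_toNNReal _ hP]; exact Vf_norm_le ha.le hh.le x
    · simp only [NNReal.coe_zero, sub_zero, Real.coe_toNNReal _ hP,
        Real.coe_toNNReal _ (mul_nonneg hP (by linarith : (0:ℝ) ≤ h + 2))]
      rw [max_eq_left (by linarith : (0:ℝ) - -1 ≤ h + 1)]
      nlinarith
  obtain ⟨f, hf0, hf⟩ := hpl.exists_eq_forall_mem_Icc_hasDerivWithinAt₀
  exact ⟨f, hf0, hf⟩

section Traj

lemma hasDerivAt_comp_fst {X : ℝ → ℝ × ℝ} {v : ℝ × ℝ} {t : ℝ} (hX : HasDerivAt X v t) :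
    HasDerivAt (fun s => (X s).1) v.1 t :=
  (ContinuousLinearMap.fst ℝ ℝ ℝ).hasFDerivAt.comp_hasDerivAt t hX

lemma hasDerivAt_comp_snd {X : ℝ → ℝ × ℝ} {v : ℝ × ℝ} {t : ℝ} (hX : HasDerivAt X v t) :
    HasDerivAt (fun s => (X s).2) v.2 t :=
  (ContinuousLinearMap.snd ℝ ℝ ℝ).hasFDerivAt.comp_hasDerivAt t hX

lemma antitone_aux {f f' : ℝ → ℝ} {lo hi : ℝ}
    (hd : ∀ t ∈ Icc lo hi, HasDerivAt f (f' t) t) (h0 : ∀ t ∈ Ioo lo hi, f' t ≤ 0) :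
    AntitoneOn f (Icc lo hi) := by
  apply antitoneOn_of_deriv_nonpos (convex_Icc lo hi)
  · exact fun t ht => (hd t ht).continuousAt.continuousWithinAt
  · intro t ht; rw [interior_Icc] at ht
    exact ((hd t (Ioo_subset_Icc_self ht)).differentiableAt).differentiableWithinAt
  · intro t ht; rw [interior_Icc] at ht
    rw [(hd t (Ioo_subset_Icc_self ht)).deriv]; exact h0 t ht

lemma monotone_aux {f f' : ℝ → ℝ} {lo hi : ℝ}
    (hd : ∀ t ∈ Icc lo hi, HasDerivAt f (f' t) t) (h0 : ∀ t ∈ Ioo lo hi, 0 ≤ f' t) :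
    MonotoneOn f (Icc lo hi) := by
  apply monotoneOn_of_deriv_nonneg (convex_Icc lo hi)
  · exact fun t ht => (hd t ht).continuousAt.continuousWithinAt
  · intro t ht; rw [interior_Icc] at ht
    exact ((hd t (Ioo_subset_Icc_self ht)).differentiableAt).differentiableWithinAt
  · intro t ht; rw [interior_Icc] at ht
    rw [(hd t (Ioo_subset_Icc_self ht)).deriv]; exact h0 t ht

lemma cont_le_of_closure {φ : ℝ → ℝ} {s T : Set ℝ} (hφ : ContinuousOn φ s) (hT : T ⊆ s)
    (hle : ∀ x ∈ T, φ x ≤ 0) {x : ℝ} (hx : x ∈ closure T) (hxs : x ∈ s) : φ x ≤ 0 := by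
  have h1 : ContinuousWithinAt φ T x := (hφ x hxs).mono hT
  haveI : (nhdsWithin x T).NeBot := mem_closure_iff_nhdsWithin_neBot.mp hx
  exact le_of_tendsto h1 (eventually_nhdsWithin_of_forall hle)

variable {a h c : ℝ} {X : ℝ → ℝ × ℝ}

section basic
variable (ha : 0 < a) (hh : 0 < h) (hX0 : X 0 = (c, 0))
  (hX : ∀ t ∈ Icc (-1:ℝ) (h+1), HasDerivWithinAt X (Vf a h (X t)) (Icc (-1) (h+1)) t)

include hh hX in
lemma hasDerivAt_X : ∀ t ∈ Icc 0 h, HasDerivAt X (Vf a h (X t)) t := by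
  intro t ht
  have hsub : t ∈ Icc (-1:ℝ) (h+1) := ⟨by linarith [ht.1], by linarith [ht.2]⟩
  exact (hX t hsub).hasDerivAt (Icc_mem_nhds (by linarith [ht.1]) (by linarith [ht.2]))

include hh hX in
lemma hasDerivAt_p : ∀ t ∈ Icc 0 h, HasDerivAt (fun s => (X s).2) (Gf a ((X t).1)) t :=
  fun t ht => hasDerivAt_comp_snd (hasDerivAt_X hh hX t ht)

include hh hX in
lemma cont_p : ContinuousOn (fun s => (X s).2) (Icc 0 h) :=
  fun t ht => (hasDerivAt_p hh hX t ht).continuousAt.continuousWithinAt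

include ha hh hX0 hX in
lemma p_antitone : AntitoneOn (fun s => (X s).2) (Icc 0 h) :=
  antitone_aux (hasDerivAt_p hh hX) (fun t _ => Gf_nonpos ha.le _)

include ha hh hX0 hX in
lemma p_nonpos : ∀ t ∈ Icc 0 h, (X t).2 ≤ 0 := by
  intro t ht
  have h0 : (X 0).2 = 0 := by rw [hX0]
  have := p_antitone ha hh hX0 hX (left_mem_Icc.2 hh.le) ht ht.1
  simpa [h0] using this

include ha hh hX0 hX in
lemma p_ge : ∀ t ∈ Icc 0 h, -(a^2/4) * t ≤ (X t).2 := by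
  intro t ht
  have hg : ∀ s ∈ Icc 0 h, HasDerivAt (fun r => (X r).2 + (a^2/4) * r)
      (Gf a ((X s).1) + a^2/4) s := by
    intro s hs
    have := (hasDerivAt_p hh hX s hs).add ((hasDerivAt_id s).const_mul (a^2/4))
    simpa [Pi.add_def] using this
  have hmono := monotone_aux hg (fun s _ => by linarith [Gf_ge ha.le ((X s).1)])
  have h0 : (X 0).2 + (a^2/4) * 0 ≤ (X t).2 + (a^2/4) * t :=
    hmono (left_mem_Icc.2 hh.le) ht ht.1
  have hz : (X 0).2 = 0 := by rw [hX0]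
  rw [hz] at h0; nlinarith [h0]

include ha hh hX0 hX in
lemma hasDerivAt_u : ∀ t ∈ Icc 0 h, HasDerivAt (fun s => (X s).1) ((X t).2) t := by
  intro t ht
  have h1 := hasDerivAt_comp_fst (hasDerivAt_X hh hX t ht)
  have h2 : (Vf a h (X t)).1 = (X t).2 := by
    show cl (Pb a h) (X t).2 = (X t).2
    have hp1 := p_nonpos ha hh hX0 hX t ht
    have hp2 := p_ge ha hh hX0 hX t ht
    have hPb : a^2/4 * h ≤ Pb a h := by unfold Pb; nlinarith [sq_nonneg a]
    apply cl_eq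
    · have : -(a^2/4) * t ≥ -(a^2/4) * h := by nlinarith [ht.2, sq_nonneg a]
      have := hp2
      unfold Pb; nlinarith [ht.2, sq_nonneg a]
    · have : 0 ≤ Pb a h := Pb_nonneg ha.le hh.le
      linarith
  rwa [h2] at h1

include ha hh hX0 hX in
lemma cont_u : ContinuousOn (fun s => (X s).1) (Icc 0 h) :=
  fun t ht => (hasDerivAt_u ha hh hX0 hX t ht).continuousAt.continuousWithinAt

include ha hh hX0 hX in
lemma u_antitone : AntitoneOn (fun s => (X s).1) (Icc 0 h) :=
  antitone_aux (hasDerivAt_u ha hh hX0 hX) (fun t ht => p_nonpos ha hh hX0 hX t (Ioo_subset_Icc_self ht))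

include ha hh hX0 hX in
lemma u_le_c : ∀ t ∈ Icc 0 h, (X t).1 ≤ c := by
  intro t ht
  have h0 : (X 0).1 = c := by rw [hX0]
  have := u_antitone ha hh hX0 hX (left_mem_Icc.2 hh.le) ht ht.1
  simpa [h0] using this

end basic
end Traj

section more
variable {a h c : ℝ} {X : ℝ → ℝ × ℝ}
variable (ha : 0 < a) (hh : 0 < h) (hX0 : X 0 = (c, 0))
  (hX : ∀ t ∈ Icc (-1:ℝ) (h+1), HasDerivWithinAt X (Vf a h (X t)) (Icc (-1) (h+1)) t)

include ha hh hX0 hX in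
lemma firstZero (hc : 0 < c) {t₀ : ℝ} (ht₀ : t₀ ∈ Icc 0 h) (hu0 : (X t₀).1 ≤ 0) :
    ∃ τ, 0 < τ ∧ τ ≤ t₀ ∧ (X τ).1 = 0 ∧ ∀ s, 0 ≤ s → s < τ → 0 < (X s).1 := by
  set S : Set ℝ := {t | t ∈ Icc 0 t₀ ∧ (X t).1 ≤ 0} with hS
  have hne : S.Nonempty := ⟨t₀, ⟨⟨ht₀.1, le_refl _⟩, hu0⟩⟩
  have hbdd : BddBelow S := ⟨0, fun x hx => hx.1.1⟩
  set τ := sInf S with hτdef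
  have hτ0 : 0 ≤ τ := le_csInf hne (fun x hx => hx.1.1)
  have hτt₀ : τ ≤ t₀ := csInf_le hbdd ⟨⟨ht₀.1, le_refl _⟩, hu0⟩
  have hτIcc : τ ∈ Icc 0 h := ⟨hτ0, hτt₀.trans ht₀.2⟩
  have hτcl : τ ∈ closure S := csInf_mem_closure hne hbdd
  have hSsub : S ⊆ Icc 0 h := fun x hx => ⟨hx.1.1, hx.1.2.trans ht₀.2⟩
  have huτle : (X τ).1 ≤ 0 :=
    cont_le_of_closure (cont_u ha hh hX0 hX) hSsub (fun x hx => hx.2) hτcl hτIcc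
  have hpos : ∀ s, 0 ≤ s → s < τ → 0 < (X s).1 := by
    intro s hs0 hsτ
    by_contra hns
    push_neg at hns
    exact absurd (csInf_le hbdd ⟨⟨hs0, by linarith⟩, hns⟩) (by linarith)
  have hτpos : 0 < τ := by
    rcases eq_or_lt_of_le hτ0 with heq | hlt
    · exfalso
      have : (X τ).1 = c := by rw [← heq, hX0]
      rw [this] at huτle; linarith
    · exact hlt
  have huτge : 0 ≤ (X τ).1 := by
    have hcl2 : τ ∈ closure (Ico 0 τ) := by
      rw [closure_Ico (ne_of_lt hτpos)]; exact ⟨hτ0, le_refl _⟩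
    have := cont_le_of_closure (φ := fun s => -(X s).1) (s := Icc 0 h) (T := Ico 0 τ)
      (cont_u ha hh hX0 hX).neg
      (fun x hx => ⟨hx.1, hx.2.le.trans hτIcc.2⟩)
      (fun x hx => by simpa using (hpos x hx.1 hx.2).le) hcl2 hτIcc
    simpa using this
  exact ⟨τ, hτpos, hτt₀, le_antisymm huτle huτge, hpos⟩

include ha hh hX0 hX in
lemma p_neg_at_zero (hc : 0 < c) (hca : c < a) {τ : ℝ} (hτ : τ ∈ Icc 0 h) (hτpos : 0 < τ)
    (hpos : ∀ s, 0 ≤ s → s < τ → 0 < (X s).1) : (X τ).2 < 0 := by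
  set t₁ := τ/2 with ht₁def
  have ht₁ : t₁ ∈ Icc 0 h := ⟨by linarith, by linarith [hτ.2]⟩
  have ht₁τ : t₁ < τ := by linarith
  have hu₁ : 0 < (X t₁).1 := hpos t₁ (by linarith) ht₁τ
  set u₁ := (X t₁).1 with hu₁def
  set β := u₁ * (a - c) with hβdef
  have hβpos : 0 < β := mul_pos hu₁ (by linarith)
  -- on [0, t₁], derivative of p is ≤ -β
  have hder : ∀ s ∈ Icc 0 t₁, HasDerivAt (fun r => (X r).2 + β * r) (Gf a ((X s).1) + β) s := by
    intro s hs
    have hs' : s ∈ Icc 0 h := ⟨hs.1, hs.2.trans ht₁.2⟩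
    have := (hasDerivAt_p hh hX s hs').add ((hasDerivAt_id s).const_mul β)
    simpa [Pi.add_def] using this
  have hbound : ∀ s ∈ Ioo 0 t₁, Gf a ((X s).1) + β ≤ 0 := by
    intro s hs
    have hs' : s ∈ Icc 0 h := ⟨hs.1.le, hs.2.le.trans ht₁.2⟩
    have hus_pos : 0 < (X s).1 := hpos s hs.1.le (by linarith [hs.2])
    have hus_le : (X s).1 ≤ c := u_le_c ha hh hX0 hX s hs'
    have hus_ge : u₁ ≤ (X s).1 :=
      u_antitone ha hh hX0 hX hs' ht₁ hs.2.le
    rw [Gf_eq hus_pos.le (hus_le.trans hca.le)]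
    nlinarith
  have hanti := antitone_aux hder hbound
  have h1 : (X t₁).2 + β * t₁ ≤ (X 0).2 + β * 0 :=
    hanti (left_mem_Icc.2 (by linarith)) ⟨by linarith, le_refl _⟩ (by linarith)
  have hz : (X 0).2 = 0 := by rw [hX0]
  rw [hz] at h1
  have hpt₁ : (X t₁).2 ≤ -(β * t₁) := by linarith
  have : (X τ).2 ≤ (X t₁).2 := p_antitone ha hh hX0 hX ht₁ hτ ht₁τ.le
  nlinarith
end more

section more2
variable {a h c : ℝ} {X : ℝ → ℝ × ℝ}
variable (ha : 0 < a) (hh : 0 < h) (hX0 : X 0 = (c, 0))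
  (hX : ∀ t ∈ Icc (-1:ℝ) (h+1), HasDerivWithinAt X (Vf a h (X t)) (Icc (-1) (h+1)) t)

include ha hh hX0 hX in
lemma affine_continuation {τ : ℝ} (hτ : τ ∈ Icc 0 h) (huτ : (X τ).1 = 0) :
    (X h).1 = (X τ).2 * (h - τ) := by
  set q := (X τ).2 with hq
  set Y : ℝ → ℝ × ℝ := fun t => (q * (t - τ), q) with hY
  have hqle : q ≤ 0 := p_nonpos ha hh hX0 hX τ hτ
  have hqge : -(a^2/4) * τ ≤ q := p_ge ha hh hX0 hX τ hτ
  have hYf : ∀ t ∈ Ico τ h, (q, (0:ℝ)) = Vf a h (Y t) := by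
    intro t ht
    have h1 : cl (Pb a h) q = q := by
      apply cl_eq
      · unfold Pb; nlinarith [hτ.2, sq_nonneg a]
      · linarith [Pb_nonneg ha.le hh.le]
    have h2 : Gf a (q * (t - τ)) = 0 :=
      Gf_zero (mul_nonpos_of_nonpos_of_nonneg hqle (by linarith [ht.1])) ha.le
    show (q, (0:ℝ)) = (cl (Pb a h) (Y t).2, Gf a (Y t).1)
    simp only [hY]
    rw [h1, h2]
  have hEq := ODE_solution_unique (v := fun _ z => Vf a h z)
    (K := Real.toNNReal (max 1 a)) (f := X) (g := Y) (a := τ) (b := h)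
    (fun _ => Vf_lip ha.le)
    (fun t ht => ((hasDerivAt_X hh hX t ⟨hτ.1.trans ht.1, ht.2⟩).continuousAt).continuousWithinAt)
    (fun t ht => (hasDerivAt_X hh hX t ⟨hτ.1.trans ht.1, ht.2.le⟩).hasDerivWithinAt)
    (Continuous.continuousOn (by fun_prop))
    (fun t ht => by
      have hYd : HasDerivAt Y (q, 0) t := by
        apply HasDerivAt.prodMk
        · have := ((hasDerivAt_id t).sub_const τ).const_mul q
          simpa using this
        · exact hasDerivAt_const t q
      exact (hYf t ht ▸ hYd).hasDerivWithinAt)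
    (by
      have h1 : Y τ = (0, q) := by simp [hY]
      rw [h1]
      exact Prod.ext huτ rfl)
  have hfin := hEq (right_mem_Icc.2 hτ.2)
  rw [hfin]
  try simp [hY]

include ha hh hX0 hX in
lemma sturm (hc : 0 < c) (hca : c < a)
    (hTh : π / Real.sqrt (a - c) ≤ h)
    (hpos : ∀ t ∈ Icc 0 (π / Real.sqrt (a - c)), 0 < (X t).1) : False := by
  set k := Real.sqrt (a - c) with hk
  have hkpos : 0 < k := Real.sqrt_pos.2 (by linarith)
  have hk2 : k^2 = a - c := Real.sq_sqrt (by linarith)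
  set T := π / k with hT
  have hTpos : 0 < T := div_pos Real.pi_pos hkpos
  set g : ℝ → ℝ := fun t => (X t).2 * Real.sin (k*t) - k * (X t).1 * Real.cos (k*t) with hg
  have hder : ∀ t ∈ Icc 0 T, HasDerivAt g
      ((Gf a ((X t).1) + k^2 * (X t).1) * Real.sin (k*t)) t := by
    intro t ht
    have ht' : t ∈ Icc 0 h := ⟨ht.1, ht.2.trans hTh⟩
    have hsin : HasDerivAt (fun s => Real.sin (k*s)) (Real.cos (k*t) * k) t := by
      have := (Real.hasDerivAt_sin (k*t)).comp t ((hasDerivAt_id t).const_mul k)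
      simpa [Function.comp_def] using this
    have hcos : HasDerivAt (fun s => Real.cos (k*s)) (-Real.sin (k*t) * k) t := by
      have := (Real.hasDerivAt_cos (k*t)).comp t ((hasDerivAt_id t).const_mul k)
      simpa [Function.comp_def] using this
    have h1 : HasDerivAt (fun s => (X s).2 * Real.sin (k*s))
        (Gf a ((X t).1) * Real.sin (k*t) + (X t).2 * (Real.cos (k*t) * k)) t :=
      (hasDerivAt_p hh hX t ht').mul hsin
    have h2 : HasDerivAt (fun s => k * (X s).1 * Real.cos (k*s))
        (k * (X t).2 * Real.cos (k*t) + k * (X t).1 * (-Real.sin (k*t) * k)) t := by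
      have := ((hasDerivAt_u ha hh hX0 hX t ht').const_mul k).mul hcos
      simpa [Pi.mul_def, mul_comm, mul_assoc, mul_left_comm] using this
    have := h1.sub h2
    exact this.congr_deriv (by ring)
  have hbound : ∀ t ∈ Ioo 0 T, (Gf a ((X t).1) + k^2 * (X t).1) * Real.sin (k*t) ≤ 0 := by
    intro t ht
    have ht'' : t ∈ Icc 0 T := ⟨ht.1.le, ht.2.le⟩
    have ht' : t ∈ Icc 0 h := ⟨ht.1.le, ht''.2.trans hTh⟩
    have hu_pos : 0 < (X t).1 := hpos t ht''
    have hu_le : (X t).1 ≤ c := u_le_c ha hh hX0 hX t ht'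
    have hsin : 0 ≤ Real.sin (k*t) := by
      apply Real.sin_nonneg_of_nonneg_of_le_pi
      · exact mul_nonneg hkpos.le ht.1.le
      · calc k * t ≤ k * T := by nlinarith [ht.2]
          _ = π := by rw [hT]; field_simp
    have hGf : Gf a ((X t).1) + k^2 * (X t).1 ≤ 0 := by
      rw [Gf_eq hu_pos.le (hu_le.trans hca.le), hk2]
      nlinarith
    exact mul_nonpos_of_nonpos_of_nonneg hGf hsin
  have hanti := antitone_aux hder hbound
  have hle : g T ≤ g 0 := hanti (left_mem_Icc.2 hTpos.le) (right_mem_Icc.2 hTpos.le) hTpos.le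
  have hg0 : g 0 = -(k * c) := by
    simp [hg, hX0]
  have hkT : k * T = π := by rw [hT]; field_simp
  have hgT : g T = k * (X T).1 := by
    simp [hg, hkT, Real.sin_pi, Real.cos_pi]
    try ring
  have huT : 0 < (X T).1 := hpos T (right_mem_Icc.2 hTpos.le)
  rw [hg0, hgT] at hle
  nlinarith
end more2

section more3
variable {a h c : ℝ} {X : ℝ → ℝ × ℝ}
variable (ha : 0 < a) (hh : 0 < h) (hX0 : X 0 = (c, 0))
  (hX : ∀ t ∈ Icc (-1:ℝ) (h+1), HasDerivWithinAt X (Vf a h (X t)) (Icc (-1) (h+1)) t)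

lemma hasDerivAt_Fa (a s : ℝ) : HasDerivAt (Fa a) (a * s - s^2) s := by
  unfold Fa
  have h1 := ((hasDerivAt_pow 2 s).const_mul a).div_const 2
  have h2 := (hasDerivAt_pow 3 s).div_const 3
  have h3 := h1.sub h2
  exact h3.congr_deriv (by push_cast; ring)

include ha hh hX0 hX in
lemma energy (hca : c ≤ a) (hpos : ∀ t ∈ Icc 0 h, 0 ≤ (X t).1) :
    ∀ t ∈ Icc 0 h, ((X t).2)^2/2 + Fa a ((X t).1) = Fa a c := by
  set E : ℝ → ℝ := fun t => ((X t).2)^2/2 + Fa a ((X t).1) with hE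
  have hder : ∀ t ∈ Icc 0 h, HasDerivAt E 0 t := by
    intro t ht
    have hu := hpos t ht
    have huc : (X t).1 ≤ c := u_le_c ha hh hX0 hX t ht
    have h1 : HasDerivAt (fun s => ((X s).2)^2/2) ((X t).2 * Gf a ((X t).1)) t := by
      have := ((hasDerivAt_p hh hX t ht).pow 2).div_const 2
      exact this.congr_deriv (by push_cast; ring)
    have h2 : HasDerivAt (fun s => Fa a ((X s).1)) ((a * (X t).1 - ((X t).1)^2) * (X t).2) t :=
      ((hasDerivAt_Fa a ((X t).1)).comp t (hasDerivAt_u ha hh hX0 hX t ht) :)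
    have h3 := h1.add h2
    have h4 : Gf a ((X t).1) = (X t).1 * ((X t).1 - a) := Gf_eq hu (huc.trans hca)
    have h5 : (X t).2 * Gf a ((X t).1) + (a * (X t).1 - ((X t).1)^2) * (X t).2 = 0 := by
      rw [h4]; ring
    rw [h5] at h3
    exact h3
  have hconst := constant_of_has_deriv_right_zero
    (f := E) (a := 0) (b := h)
    (fun t ht => (hder t ht).continuousAt.continuousWithinAt)
    (fun t ht => (hder t (Ico_subset_Icc_self ht)).hasDerivWithinAt)
  intro t ht
  have := hconst t ht
  rw [hE] at this
  simp only [hX0] at this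
  simpa [Fa] using this

-- Gronwall comparison between two trajectories
lemma gronwall_pair {Y : ℝ → ℝ × ℝ} {c' : ℝ}
    (ha : 0 < a) (hh : 0 < h) (hX0 : X 0 = (c, 0))
    (hX : ∀ t ∈ Icc (-1:ℝ) (h+1), HasDerivWithinAt X (Vf a h (X t)) (Icc (-1) (h+1)) t)
    (hY0 : Y 0 = (c', 0))
    (hY : ∀ t ∈ Icc (-1:ℝ) (h+1), HasDerivWithinAt Y (Vf a h (Y t)) (Icc (-1) (h+1)) t) :
    ∀ t ∈ Icc 0 h, dist (X t) (Y t) ≤ |c - c'| * Real.exp ((max 1 a) * t) := by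
  intro t ht
  have key := dist_le_of_trajectories_ODE (v := fun _ z => Vf a h z)
    (K := Real.toNNReal (max 1 a)) (f := X) (g := Y) (a := 0) (b := h) (δ := |c - c'|)
    (fun _ => Vf_lip ha.le)
    (fun s hs => (hasDerivAt_X hh hX s hs).continuousAt.continuousWithinAt)
    (fun s hs => (hasDerivAt_X hh hX s (Ico_subset_Icc_self hs)).hasDerivWithinAt)
    (fun s hs => (hasDerivAt_X hh hY s hs).continuousAt.continuousWithinAt)
    (fun s hs => (hasDerivAt_X hh hY s (Ico_subset_Icc_self hs)).hasDerivWithinAt)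
    (by
      rw [hX0, hY0, Prod.dist_eq]
      simp [Real.dist_eq])
    t ht
  have hcoe : (Real.toNNReal (max 1 a) : ℝ) = max 1 a :=
    Real.coe_toNNReal _ (le_max_of_le_left zero_le_one)
  rw [hcoe] at key
  simpa using key

-- comparison with the constant solution (a, 0)
include ha hh hX0 hX in
lemma gronwall_const :
    ∀ t ∈ Icc 0 h, dist (X t) ((a:ℝ), (0:ℝ)) ≤ |c - a| * Real.exp ((max 1 a) * t) := by
  intro t ht
  have key := dist_le_of_trajectories_ODE (v := fun _ z => Vf a h z)
    (K := Real.toNNReal (max 1 a)) (f := X) (g := fun _ => ((a:ℝ), (0:ℝ))) (a := 0) (b := h)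
    (δ := |c - a|)
    (fun _ => Vf_lip ha.le)
    (fun s hs => (hasDerivAt_X hh hX s hs).continuousAt.continuousWithinAt)
    (fun s hs => (hasDerivAt_X hh hX s (Ico_subset_Icc_self hs)).hasDerivWithinAt)
    continuousOn_const
    (fun s _ => by
      have hv : Vf a h ((a:ℝ), (0:ℝ)) = (0, 0) := by
        have h1 : cl (Pb a h) 0 = 0 := cl_eq (by linarith [Pb_nonneg ha.le hh.le]) (Pb_nonneg ha.le hh.le)
        have h2 : Gf a a = 0 := by rw [Gf_eq ha.le (le_refl a)]; ring
        show (cl (Pb a h) 0, Gf a a) = ((0:ℝ), (0:ℝ))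
        rw [h1, h2]
      show HasDerivWithinAt (fun _ => ((a:ℝ), (0:ℝ))) (Vf a h ((a:ℝ), (0:ℝ))) (Ici s) s
      rw [hv]
      exact (hasDerivAt_const s _).hasDerivWithinAt)
    (by rw [hX0, Prod.dist_eq]; simp [Real.dist_eq])
    t ht
  have hcoe : (Real.toNNReal (max 1 a) : ℝ) = max 1 a :=
    Real.coe_toNNReal _ (le_max_of_le_left zero_le_one)
  rw [hcoe] at key
  simpa using key
end more3

section main
variable {a h : ℝ}

lemma dist_fst_le' (x y : ℝ × ℝ) : dist x.1 y.1 ≤ dist x y := by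
  rw [Prod.dist_eq]; exact le_max_left _ _

lemma Fa_mono (ha : 0 < a) : MonotoneOn (Fa a) (Icc 0 a) := by
  apply monotone_aux (f' := fun s => a * s - s^2) (fun s _ => hasDerivAt_Fa a s)
  intro s hs
  nlinarith [hs.1, hs.2]

lemma main_exists (ha : 0 < a) (hh : 0 < h) {db ε : ℝ} (hδ1 : 0 < db) (hδ2 : db ≤ 1/2)
    (hε : 0 < ε) (hεh : ε < h)
    (H1 : π / Real.sqrt (db * a / 2) < h)
    (H2 : (1-db)*a < Real.sqrt (2*(Fa a ((1-db/2)*a) - Fa a ((1-db)*a))) * ε) :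
    ∃ (X : ℝ → ℝ × ℝ) (cs : ℝ),
      X 0 = (cs, 0) ∧
      (∀ t ∈ Icc (-1:ℝ) (h+1), HasDerivWithinAt X (Vf a h (X t)) (Icc (-1) (h+1)) t) ∧
      0 < cs ∧ cs < a ∧
      (∀ t ∈ Ico (0:ℝ) h, 0 < (X t).1) ∧
      (X h).1 = 0 ∧
      (∀ x ∈ Icc (0:ℝ) (h-ε), (1-db)*a < (X x).1) := by
  classical
  choose sol hsol0 hsolD using fun c : ℝ => exists_sol ha hh c
  set L : ℝ := max 1 a with hL
  have hL1 : (1:ℝ) ≤ L := le_max_left _ _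
  have hΨneg : ∀ c : ℝ, 0 < c → c < a → π / Real.sqrt (a - c) < h → (sol c h).1 < 0 := by
    intro c hc0 hclt hTh
    set T := π / Real.sqrt (a - c) with hT
    have hTpos : 0 < T := div_pos Real.pi_pos (Real.sqrt_pos.2 (by linarith))
    have hex : ∃ t ∈ Icc 0 T, (sol c t).1 ≤ 0 := by
      by_contra hcon
      push_neg at hcon
      exact sturm ha hh (hsol0 c) (hsolD c) hc0 hclt hTh.le (fun t ht => hcon t ht)
    obtain ⟨t₀, ht₀, hle⟩ := hex
    have ht₀h : t₀ ∈ Icc 0 h := ⟨ht₀.1, ht₀.2.trans hTh.le⟩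
    obtain ⟨τ, hτpos, hτle, hτzero, hτbefore⟩ :=
      firstZero ha hh (hsol0 c) (hsolD c) hc0 ht₀h hle
    have hτh : τ < h := lt_of_le_of_lt (hτle.trans ht₀.2) hTh
    have hτIcc : τ ∈ Icc 0 h := ⟨hτpos.le, hτh.le⟩
    have hpneg : (sol c τ).2 < 0 :=
      p_neg_at_zero ha hh (hsol0 c) (hsolD c) hc0 hclt hτIcc hτpos hτbefore
    have haff : (sol c h).1 = (sol c τ).2 * (h - τ) :=
      affine_continuation ha hh (hsol0 c) (hsolD c) hτIcc hτzero
    rw [haff]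
    exact mul_neg_of_neg_of_pos hpneg (by linarith)
  have hsturm_range : ∀ c : ℝ, 0 < c → c ≤ (1-db/2)*a → (sol c h).1 < 0 := by
    intro c hc0 hcle
    have hclt : c < a := lt_of_le_of_lt hcle (by nlinarith)
    have hge : db * a / 2 ≤ a - c := by nlinarith
    have hsq : Real.sqrt (db * a / 2) ≤ Real.sqrt (a - c) := Real.sqrt_le_sqrt hge
    have hsqpos : 0 < Real.sqrt (db * a / 2) := Real.sqrt_pos.2 (by positivity)
    have hT : π / Real.sqrt (a - c) ≤ π / Real.sqrt (db * a / 2) :=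
      div_le_div_of_nonneg_left Real.pi_pos.le hsqpos hsq
    exact hΨneg c hc0 hclt (lt_of_le_of_lt hT H1)
  -- IVT setup
  set cminus : ℝ := a/2 with hcm
  set cplus : ℝ := a - a/2 * Real.exp (-L * h) with hcp
  have hexp_pos : 0 < Real.exp (-L * h) := Real.exp_pos _
  have hexp_le1 : Real.exp (-L * h) ≤ 1 :=
    Real.exp_le_one_iff.mpr (by nlinarith)
  have hcmcp : cminus ≤ cplus := by
    rw [hcm, hcp]; nlinarith
  have hcplt : cplus < a := by rw [hcp]; nlinarith
  have hΨcont : ContinuousOn (fun c => (sol c h).1) (Icc cminus cplus) := by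
    have hlip : LipschitzWith (Real.toNNReal (Real.exp (L * h))) (fun c => (sol c h).1) := by
      apply LipschitzWith.of_dist_le_mul
      intro c c'
      have hgr := gronwall_pair ha hh (hsol0 c) (hsolD c) (hsol0 c') (hsolD c') h
        (right_mem_Icc.2 hh.le)
      calc dist (sol c h).1 (sol c' h).1 ≤ dist (sol c h) (sol c' h) := dist_fst_le' _ _
        _ ≤ |c - c'| * Real.exp (L * h) := hgr
        _ = Real.toNNReal (Real.exp (L * h)) * dist c c' := by
            rw [Real.coe_toNNReal _ (Real.exp_pos _).le, Real.dist_eq]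
            ring
    exact hlip.continuous.continuousOn
  have hΨplus : 0 < (sol cplus h).1 := by
    have hgr := gronwall_const ha hh (hsol0 cplus) (hsolD cplus) h (right_mem_Icc.2 hh.le)
    have habs : |cplus - a| = a/2 * Real.exp (-L * h) := by
      rw [hcp, abs_of_nonpos (by nlinarith)]; ring
    rw [habs] at hgr
    have hmul : a/2 * Real.exp (-L * h) * Real.exp (L * h) = a/2 := by
      rw [mul_assoc, ← Real.exp_add]
      simp
    rw [hmul] at hgr
    have h1 : |(sol cplus h).1 - a| ≤ a/2 := by
      calc |(sol cplus h).1 - a| = dist (sol cplus h).1 ((a:ℝ),(0:ℝ)).1 := by rw [Real.dist_eq]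
        _ ≤ dist (sol cplus h) ((a:ℝ),(0:ℝ)) := dist_fst_le' _ _
        _ ≤ a/2 := hgr
    have := abs_le.1 h1
    nlinarith [this.1]
  have hΨminus : (sol cminus h).1 < 0 := by
    apply hsturm_range cminus (by rw [hcm]; linarith) (by rw [hcm]; nlinarith)
  obtain ⟨cs, hcsmem, hcs0'⟩ := intermediate_value_Icc hcmcp hΨcont
    ⟨hΨminus.le, hΨplus.le⟩
  have hcs0 : (sol cs h).1 = 0 := hcs0'
  have hcs_pos : 0 < cs := lt_of_lt_of_le (by rw [hcm] at *; linarith) hcsmem.1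
  have hcs_lt : cs < a := lt_of_le_of_lt hcsmem.2 hcplt
  set X := sol cs with hXdef
  have hX0 := hsol0 cs
  have hXD := hsolD cs
  -- positivity on [0, h)
  have hupos : ∀ t ∈ Ico (0:ℝ) h, 0 < (X t).1 := by
    intro t ht
    by_contra hcon
    push_neg at hcon
    obtain ⟨τ, hτpos, hτle, hτzero, hτbefore⟩ :=
      firstZero ha hh hX0 hXD hcs_pos ⟨ht.1, ht.2.le⟩ hcon
    have hτh : τ < h := lt_of_le_of_lt hτle ht.2
    have hτIcc : τ ∈ Icc 0 h := ⟨hτpos.le, hτh.le⟩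
    have hpneg : (X τ).2 < 0 :=
      p_neg_at_zero ha hh hX0 hXD hcs_pos hcs_lt hτIcc hτpos hτbefore
    have haff : (X h).1 = (X τ).2 * (h - τ) :=
      affine_continuation ha hh hX0 hXD hτIcc hτzero
    rw [hcs0] at haff
    nlinarith
  have hu_nonneg : ∀ t ∈ Icc (0:ℝ) h, 0 ≤ (X t).1 := by
    intro t ht
    rcases eq_or_lt_of_le ht.2 with heq | hlt
    · rw [heq, hcs0]
    · exact (hupos t ⟨ht.1, hlt⟩).le
  -- lower bound on cs
  have hcs_ge : (1-db/2)*a ≤ cs := by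
    by_contra hcon
    push_neg at hcon
    have := hsturm_range cs hcs_pos hcon.le
    rw [hcs0] at this
    exact lt_irrefl 0 this
  -- asymptotics
  have hasymp : ∀ x ∈ Icc (0:ℝ) (h-ε), (1-db)*a < (X x).1 := by
    intro x hx
    by_contra hcon
    push_neg at hcon
    set s : ℝ := (1-db)*a with hs
    set s' : ℝ := (1-db/2)*a with hs'
    set m : ℝ := Real.sqrt (2*(Fa a s' - Fa a s)) with hm
    have hmnn : 0 ≤ m := Real.sqrt_nonneg _
    have hss' : Fa a s ≤ Fa a s' := by
      apply Fa_mono ha ⟨by nlinarith, by nlinarith⟩ ⟨by nlinarith, by nlinarith⟩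
      nlinarith
    have hm2 : m^2 = 2*(Fa a s' - Fa a s) := Real.sq_sqrt (by linarith)
    have hxh : x ∈ Icc (0:ℝ) h := ⟨hx.1, by linarith [hx.2]⟩
    have hE := energy ha hh hX0 hXD hcs_lt.le hu_nonneg
    -- on [x, h], p ≤ -m
    have hpm : ∀ t ∈ Icc x h, (X t).2 ≤ -m := by
      intro t ht
      have htIcc : t ∈ Icc (0:ℝ) h := ⟨hx.1.trans ht.1, ht.2⟩
      have hut_le : (X t).1 ≤ s := le_trans (u_antitone ha hh hX0 hXD hxh htIcc ht.1) hcon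
      have hut_nn : 0 ≤ (X t).1 := hu_nonneg t htIcc
      have hFa1 : Fa a ((X t).1) ≤ Fa a s := by
        apply Fa_mono ha ⟨hut_nn, by nlinarith⟩ ⟨by nlinarith, by nlinarith⟩ hut_le
      have hFa2 : Fa a s' ≤ Fa a cs := by
        apply Fa_mono ha ⟨by nlinarith, by nlinarith⟩ ⟨hcs_pos.le, hcs_lt.le⟩ hcs_ge
      have hEt := hE t htIcc
      have hple : (X t).2 ≤ 0 := p_nonpos ha hh hX0 hXD t htIcc
      nlinarith [hEt, hm2, sq_nonneg ((X t).2 + m)]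
    -- monotone argument on [x, h]
    have hder : ∀ t ∈ Icc x h, HasDerivAt (fun r => (X r).1 + m * r) ((X t).2 + m) t := by
      intro t ht
      have htIcc : t ∈ Icc (0:ℝ) h := ⟨hx.1.trans ht.1, ht.2⟩
      have := (hasDerivAt_u ha hh hX0 hXD t htIcc).add ((hasDerivAt_id t).const_mul m)
      simpa [Pi.add_def] using this
    have hanti := antitone_aux hder (fun t ht => by
      have := hpm t (Ioo_subset_Icc_self ht); linarith)
    have hxle : x ≤ h := by linarith [hx.2]
    have h1 : (X h).1 + m * h ≤ (X x).1 + m * x :=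
      hanti (left_mem_Icc.2 hxle) (right_mem_Icc.2 hxle) hxle
    rw [hcs0] at h1
    have hfin : m * ε ≤ s := by nlinarith [hx.2]
    rw [hs] at hfin
    nlinarith [H2]
  exact ⟨X, cs, hX0, hXD, hcs_pos, hcs_lt, hupos, hcs0, hasymp⟩
end main

section vside
variable {a h : ℝ}

lemma unpack_v (hh : 0 < h) {v : ℝ → ℝ}
    (hv2 : ContDiffOn ℝ 2 v (Icc 0 h))
    (hode : ∀ x ∈ Ioo (0:ℝ) h, -(deriv (deriv v) x) = v x * (a - v x)) :
    ContinuousOn v (Icc 0 h) ∧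
    ContinuousOn (derivWithin v (Icc 0 h)) (Icc 0 h) ∧
    (∀ x ∈ Ioo (0:ℝ) h, HasDerivAt v (derivWithin v (Icc 0 h) x) x) ∧
    (∀ x ∈ Ioo (0:ℝ) h, HasDerivAt (derivWithin v (Icc 0 h)) (v x^2 - a * v x) x) ∧
    HasDerivWithinAt v (derivWithin v (Icc 0 h) 0) (Ici 0) 0 ∧
    HasDerivWithinAt (derivWithin v (Icc 0 h)) (v 0^2 - a * v 0) (Ici 0) 0 := by
  have hud : UniqueDiffOn ℝ (Icc (0:ℝ) h) := uniqueDiffOn_Icc hh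
  set q := derivWithin v (Icc 0 h) with hq
  have hv2' : ContDiffOn ℝ (1+1) v (Icc 0 h) := by norm_num; exact hv2
  obtain ⟨hdiff, -, hq1⟩ := (contDiffOn_succ_iff_derivWithin hud).1 hv2'
  have hq1' : ContDiffOn ℝ (0+1) q (Icc 0 h) := by norm_num; exact hq1
  obtain ⟨hqdiff, -, hq0cont⟩ := (contDiffOn_succ_iff_derivWithin hud).1 hq1'
  have hqcont : ContinuousOn q (Icc 0 h) := hq1.continuousOn
  have hvcont : ContinuousOn v (Icc 0 h) := hv2.continuousOn
  -- interior facts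
  have hmemnhds : ∀ x ∈ Ioo (0:ℝ) h, Icc (0:ℝ) h ∈ nhds x := fun x hx =>
    Icc_mem_nhds hx.1 hx.2
  have hqeq : ∀ x ∈ Ioo (0:ℝ) h, q x = deriv v x := fun x hx =>
    derivWithin_of_mem_nhds (hmemnhds x hx)
  have hvd : ∀ x ∈ Ioo (0:ℝ) h, HasDerivAt v (q x) x := by
    intro x hx
    have h1 : DifferentiableAt ℝ v x := (hdiff x (Ioo_subset_Icc_self hx)).differentiableAt
      (hmemnhds x hx)
    rw [hqeq x hx]
    exact h1.hasDerivAt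
  -- second derivative facts on the open interval
  have hopen : ContDiffOn ℝ (1+1) v (Ioo 0 h) := hv2'.mono Ioo_subset_Icc_self
  obtain ⟨-, -, hdv1⟩ := (contDiffOn_succ_iff_deriv_of_isOpen isOpen_Ioo).1 hopen
  have hdvdiff : DifferentiableOn ℝ (deriv v) (Ioo 0 h) := hdv1.differentiableOn (by norm_num)
  have hqev : ∀ x ∈ Ioo (0:ℝ) h, (fun y => q y) =ᶠ[nhds x] (fun y => deriv v y) := by
    intro x hx
    exact Filter.eventuallyEq_of_mem (isOpen_Ioo.mem_nhds hx) (fun y hy => hqeq y hy)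
  have hqd : ∀ x ∈ Ioo (0:ℝ) h, HasDerivAt q (v x^2 - a * v x) x := by
    intro x hx
    have h1 : DifferentiableAt ℝ (deriv v) x :=
      (hdvdiff x hx).differentiableAt (isOpen_Ioo.mem_nhds hx)
    have h2 : HasDerivAt (deriv v) (deriv (deriv v) x) x := h1.hasDerivAt
    have h3 : deriv (deriv v) x = v x^2 - a * v x := by
      have := hode x hx; nlinarith [this]
    rw [h3] at h2
    exact h2.congr_of_eventuallyEq (hqev x hx)
  -- values at 0
  have h0mem : (0:ℝ) ∈ Icc (0:ℝ) h := ⟨le_refl _, hh.le⟩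
  have hIccIci : Icc (0:ℝ) h ∈ nhdsWithin (0:ℝ) (Ici 0) :=
    Icc_mem_nhdsGE hh
  have hv0 : HasDerivWithinAt v (q 0) (Ici 0) 0 :=
    ((hdiff 0 h0mem).hasDerivWithinAt).mono_of_mem_nhdsWithin hIccIci
  -- derivative of q at 0
  have hq0' : HasDerivWithinAt q (derivWithin q (Icc 0 h) 0) (Ici 0) 0 :=
    ((hqdiff 0 h0mem).hasDerivWithinAt).mono_of_mem_nhdsWithin hIccIci
  have hkey : derivWithin q (Icc 0 h) 0 = v 0^2 - a * v 0 := by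
    set φ : ℝ → ℝ := fun x => derivWithin q (Icc 0 h) x - (v x^2 - a * v x) with hφ
    have hφcont : ContinuousOn φ (Icc 0 h) := by
      apply ContinuousOn.sub (hq0cont.continuousOn)
      exact (hvcont.pow 2).sub (hvcont.const_smul a)
    have hφzero : ∀ x ∈ Ioo (0:ℝ) h, φ x = 0 := by
      intro x hx
      have e1 : derivWithin q (Icc 0 h) x = deriv q x := derivWithin_of_mem_nhds (hmemnhds x hx)
      have e2 : deriv q x = v x^2 - a * v x := (hqd x hx).deriv
      simp [hφ, e1, e2]
    have hcl : (0:ℝ) ∈ closure (Ioo (0:ℝ) h) := by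
      rw [closure_Ioo hh.ne]; exact h0mem
    have hle1 : φ 0 ≤ 0 :=
      cont_le_of_closure hφcont Ioo_subset_Icc_self (fun x hx => (hφzero x hx).le) hcl h0mem
    have hle2 : -φ 0 ≤ 0 := by
      have := cont_le_of_closure (φ := fun x => -φ x) hφcont.neg Ioo_subset_Icc_self
        (fun x hx => by simp [hφzero x hx]) hcl h0mem
      simpa using this
    have : φ 0 = 0 := le_antisymm hle1 (by linarith)
    rw [hφ] at this
    simp only at this
    linarith [this]
  rw [hkey] at hq0'
  exact ⟨hvcont, hqcont, hvd, hqd, hv0, hq0'⟩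
end vside

section wronskian
variable {a h : ℝ}

lemma no_two (hh : 0 < h) {f g pf pg : ℝ → ℝ}
    (hfc : ContinuousOn f (Icc 0 h)) (hgc : ContinuousOn g (Icc 0 h))
    (hpfc : ContinuousOn pf (Icc 0 h)) (hpgc : ContinuousOn pg (Icc 0 h))
    (hfd : ∀ x ∈ Ioo (0:ℝ) h, HasDerivAt f (pf x) x)
    (hgd : ∀ x ∈ Ioo (0:ℝ) h, HasDerivAt g (pg x) x)
    (hpfd : ∀ x ∈ Ioo (0:ℝ) h, HasDerivAt pf (f x^2 - a * f x) x)
    (hpgd : ∀ x ∈ Ioo (0:ℝ) h, HasDerivAt pg (g x^2 - a * g x) x)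
    (hpf0 : pf 0 = 0) (hpg0 : pg 0 = 0)
    (hfpos : ∀ x ∈ Ico (0:ℝ) h, 0 < f x) (hgpos : ∀ x ∈ Ico (0:ℝ) h, 0 < g x)
    (hfh : f h = 0) (hgh : g h = 0)
    (hlt : g 0 < f 0) : False := by
  -- first crossing point
  set S : Set ℝ := {x | x ∈ Icc 0 h ∧ f x ≤ g x} with hS
  have hne : S.Nonempty := ⟨h, ⟨right_mem_Icc.2 hh.le, by rw [hfh, hgh]⟩⟩
  have hbdd : BddBelow S := ⟨0, fun x hx => hx.1.1⟩
  set ξ := sInf S with hξ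
  have hξ0 : 0 ≤ ξ := le_csInf hne (fun x hx => hx.1.1)
  have hξh : ξ ≤ h := csInf_le hbdd ⟨right_mem_Icc.2 hh.le, by rw [hfh, hgh]⟩
  have hξIcc : ξ ∈ Icc (0:ℝ) h := ⟨hξ0, hξh⟩
  have hξcl : ξ ∈ closure S := csInf_mem_closure hne hbdd
  have hfgle : f ξ ≤ g ξ := by
    have h1 : f ξ - g ξ ≤ 0 := cont_le_of_closure (φ := fun x => f x - g x) (hfc.sub hgc)
      (fun x hx => hx.1) (fun x hx => sub_nonpos.mpr hx.2) hξcl hξIcc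
    linarith
  have hbefore : ∀ x, 0 ≤ x → x < ξ → g x < f x := by
    intro x hx0 hxξ
    by_contra hcon
    push_neg at hcon
    exact absurd (csInf_le hbdd ⟨⟨hx0, by linarith [hξh]⟩, hcon⟩) (by linarith)
  have hξpos : 0 < ξ := by
    rcases eq_or_lt_of_le hξ0 with heq | hlt'
    · exfalso; rw [← heq] at hfgle; linarith
    · exact hlt'
  have hfgeq : f ξ = g ξ := by
    apply le_antisymm hfgle
    have h1 : g ξ - f ξ ≤ 0 := cont_le_of_closure (φ := fun x => g x - f x) (hgc.sub hfc)
      (fun x (hx : x ∈ Ico (0:ℝ) ξ) => ⟨hx.1, hx.2.le.trans hξh⟩)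
      (fun x hx => sub_nonpos.mpr (hbefore x hx.1 hx.2).le) (by
        rw [closure_Ico hξpos.ne]; exact ⟨hξ0, le_refl _⟩) hξIcc
    linarith
  -- Wronskian
  set W : ℝ → ℝ := fun x => pf x * g x - pg x * f x with hW
  have hWd : ∀ x ∈ Ioo (0:ℝ) ξ, HasDerivAt W (f x * g x * (f x - g x)) x := by
    intro x hx
    have hx' : x ∈ Ioo (0:ℝ) h := ⟨hx.1, lt_of_lt_of_le hx.2 hξh⟩
    have h1 := ((hpfd x hx').mul (hgd x hx')).sub ((hpgd x hx').mul (hfd x hx'))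
    exact h1.congr_deriv (by ring)
  have hWc : ContinuousOn W (Icc 0 ξ) := by
    apply ContinuousOn.sub
    · exact (hpfc.mono (Icc_subset_Icc_right hξh)).mul (hgc.mono (Icc_subset_Icc_right hξh))
    · exact (hpgc.mono (Icc_subset_Icc_right hξh)).mul (hfc.mono (Icc_subset_Icc_right hξh))
  have hWmono : StrictMonoOn W (Icc 0 ξ) := by
    apply strictMonoOn_of_deriv_pos (convex_Icc 0 ξ) hWc
    intro x hx
    rw [interior_Icc] at hx
    rw [(hWd x hx).deriv]
    have hx0 : 0 ≤ x := hx.1.le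
    have hxh : x < h := lt_of_lt_of_le hx.2 hξh
    have hf_pos : 0 < f x := hfpos x ⟨hx0, hxh⟩
    have hg_pos : 0 < g x := hgpos x ⟨hx0, hxh⟩
    have hgt : g x < f x := hbefore x hx0 hx.2
    have : 0 < f x - g x := by linarith
    positivity
  have hW0 : W 0 = 0 := by simp [hW, hpf0, hpg0]
  have hWξ : 0 < W ξ := by
    have := hWmono (left_mem_Icc.2 hξ0) (right_mem_Icc.2 hξ0) hξpos
    rw [hW0] at this
    exact this
  rcases eq_or_lt_of_le hξh with heq | hlth
  · -- ξ = h : W h = 0, contradiction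
    rw [heq] at hWξ
    have : W h = 0 := by simp [hW, hfh, hgh]
    linarith
  · -- ξ < h : transversality
    have hgξpos : 0 < g ξ := hgpos ξ ⟨hξ0, hlth⟩
    have hWξval : W ξ = g ξ * (pf ξ - pg ξ) := by
      show pf ξ * g ξ - pg ξ * f ξ = g ξ * (pf ξ - pg ξ)
      rw [hfgeq]; ring
    have hpfpg : 0 < pf ξ - pg ξ := by
      by_contra hcon
      push_neg at hcon
      nlinarith [hWξval, hWξ, hgξpos]
    -- D := f - g has positive derivative at ξ but is positive before and zero at ξ
    have hξIoo : ξ ∈ Ioo (0:ℝ) h := ⟨hξpos, hlth⟩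
    have hDd : HasDerivAt (fun x => f x - g x) (pf ξ - pg ξ) ξ :=
      (hfd ξ hξIoo).sub (hgd ξ hξIoo)
    have hslope := hasDerivAt_iff_tendsto_slope.mp hDd
    have hev : ∀ᶠ y in nhdsWithin ξ {ξ}ᶜ, 0 < slope (fun x => f x - g x) ξ y :=
      hslope.eventually (eventually_gt_nhds hpfpg)
    have hev2 : ∀ᶠ y in nhdsWithin ξ (Iio ξ), 0 < slope (fun x => f x - g x) ξ y :=
      hev.filter_mono (nhdsWithin_mono ξ (fun y (hy : y ∈ Iio ξ) => ne_of_lt hy))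
    have hIoo : Ioo (0:ℝ) ξ ∈ nhdsWithin ξ (Iio ξ) := Ioo_mem_nhdsLT_of_mem ⟨hξpos, le_refl _⟩
    have hcomb := hev2.and (Filter.eventually_of_mem hIoo (fun y hy => hy))
    have hNeBot : (nhdsWithin ξ (Iio ξ)).NeBot := by infer_instance
    obtain ⟨y, hy1, hy2⟩ := hcomb.exists
    have hslope_val : slope (fun x => f x - g x) ξ y =
        ((f y - g y) - (f ξ - g ξ)) / (y - ξ) := by
      rw [slope_def_field]
      try ring
    rw [hslope_val, hfgeq] at hy1
    have hnum : (f y - g y) / (y - ξ) > 0 := by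
      simpa using hy1
    have hyneg : y - ξ < 0 := by linarith [hy2.2]
    have hfy : g y < f y := hbefore y hy2.1.le hy2.2
    have : (f y - g y) / (y - ξ) < 0 := div_neg_of_pos_of_neg (by linarith) hyneg
    linarith
end wronskian

end
end ESS

open ESS Set in
/-- Asymptotics of the elliptic steady state (Appendix Theorem): fix `h > 0` and
`ε ∈ (0,h)`. For every `δ > 0` there is `A` such that for all `a > A` the problem
`-u'' = u(a-u)` on `(0,h)`, `u'(0) = 0`, `u(h) = 0` has a unique positive solution `û`,
and `|û(x)/a - 1| < δ` for all `x ∈ [0, h-ε]` (i.e. `û = a - g_a` with `g_a/a → 0`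
uniformly on `[0, h-ε]`). -/
theorem elliptic_steady_state_asymptotics (h ε : ℝ) (hh : 0 < h) (hε : 0 < ε)
    (hεh : ε < h) :
    ∀ δ : ℝ, 0 < δ → ∃ A : ℝ, ∀ a : ℝ, A < a →
      ∃ u : ℝ → ℝ,
        ContDiffOn ℝ 2 u (Set.Icc 0 h) ∧
        (∀ x ∈ Set.Ico (0:ℝ) h, 0 < u x) ∧
        (∀ x ∈ Set.Ioo (0:ℝ) h, -(deriv (deriv u) x) = u x * (a - u x)) ∧
        derivWithin u (Set.Icc 0 h) 0 = 0 ∧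
        u h = 0 ∧
        (∀ x ∈ Set.Icc (0:ℝ) (h - ε), |u x / a - 1| < δ) ∧
        (∀ v : ℝ → ℝ,
          ContDiffOn ℝ 2 v (Set.Icc 0 h) →
          (∀ x ∈ Set.Ico (0:ℝ) h, 0 < v x) →
          (∀ x ∈ Set.Ioo (0:ℝ) h, -(deriv (deriv v) x) = v x * (a - v x)) →
          derivWithin v (Set.Icc 0 h) 0 = 0 →
          v h = 0 →
          ∀ x ∈ Set.Icc (0:ℝ) h, v x = u x) := by
  intro δ hδ
  set db := min δ (1/2) with hdbdef
  have hdb0 : 0 < db := lt_min hδ (by norm_num)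
  have hdb2 : db ≤ 1/2 := min_le_right _ _
  have hdbδ : db ≤ δ := min_le_left _ _
  set κ : ℝ := ((1-db/2)^2/2 - (1-db/2)^3/3) - ((1-db)^2/2 - (1-db)^3/3) with hκdef
  have hκpos : 0 < κ := by rw [hκdef]; nlinarith [hdb0, hdb2, sq_nonneg db, mul_pos hdb0 hdb0]
  refine ⟨2*Real.pi^2/(db*h^2) + 1/(2*κ*ε^2) + 1, ?_⟩
  intro a haA
  have t1 : 0 < 2*Real.pi^2/(db*h^2) := by positivity
  have t2 : 0 < 1/(2*κ*ε^2) := by positivity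
  have ha : 0 < a := by linarith
  have ha1' : 2*Real.pi^2 < db*h^2*a := by
    have h1 : 2*Real.pi^2/(db*h^2) < a := by linarith
    have := (div_lt_iff₀ (by positivity : (0:ℝ) < db*h^2)).1 h1
    linarith
  have ha2' : 1 < 2*κ*ε^2*a := by
    have h1 : 1/(2*κ*ε^2) < a := by linarith
    have := (div_lt_iff₀ (by positivity : (0:ℝ) < 2*κ*ε^2)).1 h1
    linarith
  have H1 : Real.pi / Real.sqrt (db * a / 2) < h := by
    have hsq : Real.pi/h < Real.sqrt (db*a/2) := by
      rw [show Real.pi/h = Real.sqrt ((Real.pi/h)^2) from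
        (Real.sqrt_sq (by positivity)).symm]
      apply Real.sqrt_lt_sqrt (by positivity)
      rw [div_pow, div_lt_iff₀ (by positivity : (0:ℝ) < h^2)]
      nlinarith
    rw [div_lt_iff₀ (Real.sqrt_pos.2 (by positivity))]
    have := (div_lt_iff₀ hh).1 hsq
    linarith
  have H2 : (1-db)*a < Real.sqrt (2*(Fa a ((1-db/2)*a) - Fa a ((1-db)*a))) * ε := by
    have hκeq : 2*(Fa a ((1-db/2)*a) - Fa a ((1-db)*a)) = 2*κ*a^3 := by
      rw [hκdef]; unfold Fa; ring
    rw [hκeq]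
    have hsuff : (1-db)*a/ε < Real.sqrt (2*κ*a^3) := by
      apply (Real.lt_sqrt (div_nonneg (mul_nonneg (by linarith) ha.le) hε.le)).2
      rw [div_pow, div_lt_iff₀ (by positivity : (0:ℝ) < ε^2)]
      have hint1 : 1 * a^2 < (2*κ*ε^2*a) * a^2 :=
        mul_lt_mul_of_pos_right ha2' (by positivity : (0:ℝ) < a^2)
      have h12 : (1-db)^2 ≤ 1 := by nlinarith [hdb0, hdb2]
      have hint2 : (1-db)^2*a^2 ≤ 1*a^2 :=
        mul_le_mul_of_nonneg_right h12 (by positivity : (0:ℝ) ≤ a^2)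
      nlinarith [hint1, hint2]
    have := (div_lt_iff₀ hε).1 hsuff
    linarith
  obtain ⟨X, cs, hX0, hXD, hcs0, hcsa, hupos, huh, hasymp⟩ :=
    main_exists ha hh hdb0 hdb2 hε hεh H1 H2
  -- basic facts about u
  set u : ℝ → ℝ := fun t => (X t).1 with hudef
  have hud : UniqueDiffOn ℝ (Icc (0:ℝ) h) := uniqueDiffOn_Icc hh
  have hDu : ∀ t ∈ Icc (0:ℝ) h, HasDerivAt u ((X t).2) t := hasDerivAt_u ha hh hX0 hXD
  have hDp : ∀ t ∈ Icc (0:ℝ) h, HasDerivAt (fun s => (X s).2) (Gf a ((X t).1)) t :=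
    hasDerivAt_p hh hXD
  have hu_le : ∀ t ∈ Icc (0:ℝ) h, u t ≤ cs := u_le_c ha hh hX0 hXD
  have hu_nonneg : ∀ t ∈ Icc (0:ℝ) h, 0 ≤ u t := by
    intro t ht
    rcases eq_or_lt_of_le ht.2 with heq | hlt
    · rw [hudef]; simp only; rw [heq, huh]
    · exact (hupos t ⟨ht.1, hlt⟩).le
  have hderivWithin_eq : ∀ t ∈ Icc (0:ℝ) h, derivWithin u (Icc 0 h) t = (X t).2 :=
    fun t ht => ((hDu t ht).hasDerivWithinAt).derivWithin (hud t ht)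
  have hp_derivWithin : ∀ t ∈ Icc (0:ℝ) h,
      derivWithin (fun s => (X s).2) (Icc 0 h) t = Gf a (u t) :=
    fun t ht => ((hDp t ht).hasDerivWithinAt).derivWithin (hud t ht)
  have hGcont : Continuous (Gf a) := by
    have hmf : Continuous (mf a) := continuous_const.max (continuous_id.min continuous_const)
    exact hmf.mul (hmf.sub continuous_const)
  have hcont_u : ContinuousOn u (Icc 0 h) := cont_u ha hh hX0 hXD
  have hcontp : ContinuousOn (fun s => (X s).2) (Icc 0 h) := cont_p hh hXD
  have hc2 : ContDiffOn ℝ 2 u (Icc 0 h) := by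
    have hstep1 : ContDiffOn ℝ (0+1) (fun s => (X s).2) (Icc 0 h) := by
      rw [contDiffOn_succ_iff_derivWithin hud]
      refine ⟨fun t ht => (hDp t ht).differentiableAt.differentiableWithinAt, by simp, ?_⟩
      rw [contDiffOn_zero]
      exact ((hGcont.comp_continuousOn hcont_u).congr hp_derivWithin)
    have hstep2 : ContDiffOn ℝ (1+1) u (Icc 0 h) := by
      rw [contDiffOn_succ_iff_derivWithin hud]
      refine ⟨fun t ht => (hDu t ht).differentiableAt.differentiableWithinAt, by simp, ?_⟩
      have h01 : (0:WithTop ℕ∞)+1 = 1 := by norm_num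
      rw [h01] at hstep1
      exact hstep1.congr hderivWithin_eq
    have h12 : (1:WithTop ℕ∞)+1 = 2 := by norm_num
    rwa [h12] at hstep2
  have hODE : ∀ x ∈ Ioo (0:ℝ) h, -(deriv (deriv u) x) = u x * (a - u x) := by
    intro x hx
    have hxIcc : x ∈ Icc (0:ℝ) h := Ioo_subset_Icc_self hx
    have e1 : deriv u =ᶠ[nhds x] (fun s => (X s).2) :=
      Filter.eventuallyEq_of_mem (isOpen_Ioo.mem_nhds hx)
        (fun y hy => (hDu y (Ioo_subset_Icc_self hy)).deriv)
    have e2 : deriv (deriv u) x = Gf a (u x) :=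
      (e1.deriv_eq).trans ((hDp x hxIcc).deriv)
    rw [e2, Gf_eq (hu_nonneg x hxIcc) ((hu_le x hxIcc).trans hcsa.le)]
    ring
  refine ⟨u, hc2, hupos, hODE, ?_, huh, ?_, ?_⟩
  · rw [hderivWithin_eq 0 ⟨le_refl _, hh.le⟩, hX0]
  · -- asymptotics
    intro x hx
    have hxIcc : x ∈ Icc (0:ℝ) h := ⟨hx.1, by linarith [hx.2]⟩
    have h1 : (1-db)*a < u x := hasymp x hx
    have h2 : u x < a := lt_of_le_of_lt (hu_le x hxIcc) hcsa
    have h3 : u x / a < 1 := (div_lt_one ha).2 h2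
    have h4 : 1 - db < u x / a := by
      rw [lt_div_iff₀ ha]
      linarith
    rw [abs_of_nonpos (by linarith)]
    have : 1 - u x / a < db := by linarith
    linarith [hdbδ]
  · -- uniqueness
    intro v hv2 hvpos hvode hvq0 hvh
    obtain ⟨hvc, hqc, hvd, hqd, hv0w, hq0w⟩ := unpack_v hh hv2 hvode
    have hufd : ∀ x ∈ Ioo (0:ℝ) h, HasDerivAt u ((X x).2) x :=
      fun x hx => hDu x (Ioo_subset_Icc_self hx)
    have hupd : ∀ x ∈ Ioo (0:ℝ) h, HasDerivAt (fun s => (X s).2) (u x^2 - a * u x) x := by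
      intro x hx
      have hxIcc : x ∈ Icc (0:ℝ) h := Ioo_subset_Icc_self hx
      have h1 := hDp x hxIcc
      rw [Gf_eq (hu_nonneg x hxIcc) ((hu_le x hxIcc).trans hcsa.le)] at h1
      have h2 : u x * (u x - a) = u x^2 - a * u x := by ring
      rwa [h2] at h1
    have hpu0 : (X 0).2 = 0 := by rw [hX0]
    have hu0 : u 0 = cs := by rw [hudef]; simp only; rw [hX0]
    -- equal initial values
    have hveq0 : v 0 = u 0 := by
      by_contra hne
      rcases lt_or_gt_of_ne hne with hlt | hgt
      · exact no_two hh hcont_u hvc hcontp hqc hufd hvd hupd hqd hpu0 hvq0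
          hupos hvpos huh hvh hlt
      · exact no_two hh hvc hcont_u hqc hcontp hvd hufd hqd hupd hvq0 hpu0
          hvpos hupos hvh huh hgt
    -- pair uniqueness
    set Z : ℝ → ℝ × ℝ := fun t => (v t, derivWithin v (Icc 0 h) t) with hZdef
    have hZc : ContinuousOn Z (Icc 0 h) := hvc.prodMk hqc
    have hXc : ContinuousOn X (Icc 0 h) :=
      fun t ht => (hasDerivAt_X hh hXD t ht).continuousAt.continuousWithinAt
    obtain ⟨R1, hR1⟩ := isCompact_Icc.exists_bound_of_continuousOn hXc
    obtain ⟨R2, hR2⟩ := isCompact_Icc.exists_bound_of_continuousOn hZc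
    set RR := max R1 R2 with hRRdef
    have hRRnn : 0 ≤ RR :=
      le_trans (norm_nonneg (X 0)) (le_trans (hR1 0 ⟨le_refl _, hh.le⟩) (le_max_left _ _))
    set K : NNReal := Real.toNNReal (max 1 (2*RR + |a|)) with hKdef
    have hKcoe : (K : ℝ) = max 1 (2*RR + |a|) :=
      Real.coe_toNNReal _ (le_max_of_le_left zero_le_one)
    set Wf : ℝ → ℝ × ℝ → ℝ × ℝ := fun _ z => (z.2, z.1^2 - a*z.1) with hWfdef
    have hlip : ∀ t, LipschitzOnWith K (Wf t) (Metric.closedBall (0:ℝ×ℝ) RR) := by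
      intro t
      apply LipschitzOnWith.of_dist_le_mul
      intro z hz w hw
      have hz1 : |z.1| ≤ RR := by
        have := mem_closedBall_zero_iff.1 hz
        rw [Prod.norm_def] at this
        exact le_trans (le_max_left _ _) this
      have hw1 : |w.1| ≤ RR := by
        have := mem_closedBall_zero_iff.1 hw
        rw [Prod.norm_def] at this
        exact le_trans (le_max_left _ _) this
      rw [hKcoe, Prod.dist_eq, Prod.dist_eq]
      have hcomp2 : dist (Wf t z).2 (Wf t w).2 ≤ (2*RR + |a|) * dist z.1 w.1 := by
        simp only [hWfdef, Real.dist_eq]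
        have hfact : z.1^2 - a*z.1 - (w.1^2 - a*w.1) = (z.1 - w.1) * (z.1 + w.1 - a) := by ring
        rw [hfact, abs_mul]
        have hb : |z.1 + w.1 - a| ≤ 2*RR + |a| := by
          have h1 : |z.1 + w.1 - a| ≤ |z.1 + w.1| + |a| := abs_sub _ _
          have h2 : |z.1 + w.1| ≤ |z.1| + |w.1| := abs_add_le _ _
          linarith
        calc |z.1 - w.1| * |z.1 + w.1 - a| ≤ |z.1 - w.1| * (2*RR+|a|) :=
              mul_le_mul_of_nonneg_left hb (abs_nonneg _)
          _ = (2*RR+|a|) * |z.1 - w.1| := mul_comm _ _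
      have hcomp1 : dist (Wf t z).1 (Wf t w).1 = dist z.2 w.2 := by
        simp [hWfdef]
      apply max_le
      · rw [hcomp1]
        calc dist z.2 w.2 ≤ max (dist z.1 w.1) (dist z.2 w.2) := le_max_right _ _
          _ ≤ max 1 (2*RR + |a|) * max (dist z.1 w.1) (dist z.2 w.2) := by
              nlinarith [le_max_left (1:ℝ) (2*RR + |a|), dist_nonneg (x := z.1) (y := w.1),
                dist_nonneg (x := z.2) (y := w.2), le_max_left (dist z.1 w.1) (dist z.2 w.2),
                le_max_right (dist z.1 w.1) (dist z.2 w.2)]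
      · calc dist (Wf t z).2 (Wf t w).2 ≤ (2*RR + |a|) * dist z.1 w.1 := hcomp2
          _ ≤ max 1 (2*RR + |a|) * max (dist z.1 w.1) (dist z.2 w.2) := by
              apply mul_le_mul (le_max_right _ _) (le_max_left _ _) dist_nonneg
                (le_trans zero_le_one (le_max_left _ _))
    have hXode : ∀ t ∈ Ico (0:ℝ) h, HasDerivWithinAt X (Wf t (X t)) (Ici t) t := by
      intro t ht
      have htIcc : t ∈ Icc (0:ℝ) h := Ico_subset_Icc_self ht
      have h1 : HasDerivAt (fun s => ((X s).1, (X s).2)) ((X t).2, u t^2 - a * u t) t := by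
        apply HasDerivAt.prodMk (hDu t htIcc)
        have h2 := hDp t htIcc
        rw [Gf_eq (hu_nonneg t htIcc) ((hu_le t htIcc).trans hcsa.le)] at h2
        have h3 : u t * (u t - a) = u t^2 - a * u t := by ring
        rwa [h3] at h2
      exact h1.hasDerivWithinAt
    have hZode : ∀ t ∈ Ico (0:ℝ) h, HasDerivWithinAt Z (Wf t (Z t)) (Ici t) t := by
      intro t ht
      rcases eq_or_lt_of_le ht.1 with heq | hlt
      · subst heq
        exact hv0w.prodMk hq0w
      · have htIoo : t ∈ Ioo (0:ℝ) h := ⟨hlt, ht.2⟩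
        exact ((hvd t htIoo).prodMk (hqd t htIoo)).hasDerivWithinAt
    have hXmem : ∀ t ∈ Ico (0:ℝ) h, X t ∈ Metric.closedBall (0:ℝ×ℝ) RR := by
      intro t ht
      rw [mem_closedBall_zero_iff]
      exact le_trans (hR1 t (Ico_subset_Icc_self ht)) (le_max_left _ _)
    have hZmem : ∀ t ∈ Ico (0:ℝ) h, Z t ∈ Metric.closedBall (0:ℝ×ℝ) RR := by
      intro t ht
      rw [mem_closedBall_zero_iff]
      exact le_trans (hR2 t (Ico_subset_Icc_self ht)) (le_max_right _ _)
    have hstart : Z 0 = X 0 := by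
      rw [hZdef]
      simp only
      rw [hvq0, hveq0, hu0, hX0]
    have hEqOn := ODE_solution_unique_of_mem_Icc_right (fun t _ => hlip t) hZc hZode hZmem hXc hXode hXmem hstart
    intro x hx
    have := hEqOn hx
    have h1 : (Z x).1 = (X x).1 := by rw [this]
    exact h1
end

section
/- Delta sequence (Appendix Lemma): For n ∈ ℕ define S_n(x) = n(e^{-nx} - e^{-n²x}) for x ≥ 0 and S_n(x) = 0 for x < 0. Then for every bounded function f : ℝ → ℝ that is continuous at 0, lim_{n→∞} ∫_{-∞}^{∞} f(x) S_n(x) dx = f(0). -/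
open Real Filter MeasureTheory Set

/-- The delta sequence `S_n(x) = n(e^{-nx} - e^{-n²x})` for `x ≥ 0`, `0` for `x < 0`. -/
noncomputable def Sseq (n : ℕ) (x : ℝ) : ℝ :=
  if 0 ≤ x then (n : ℝ) * (Real.exp (-(n : ℝ) * x) - Real.exp (-(n : ℝ) ^ 2 * x)) else 0

lemma delta_integrable_aux (f : ℝ → ℝ) (hf : Measurable f) (C : ℝ) (hC : ∀ x, |f x| ≤ C)
    {c : ℝ} (hc : 0 < c) :
    IntegrableOn (fun x => f x * Real.exp (-c * x)) (Ioi 0) := by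
  exact (exp_neg_integrableOn_Ioi 0 hc).bdd_mul hf.aestronglyMeasurable.restrict
    (c := C) (ae_of_all _ fun x => hC x)

lemma delta_cov (f : ℝ → ℝ) {c : ℝ} (hc : 0 < c) :
    ∫ x in Ioi (0:ℝ), f x * Real.exp (-c * x) =
      c⁻¹ * ∫ y in Ioi (0:ℝ), f (y / c) * Real.exp (-y) := by
  have h := integral_comp_mul_left_Ioi (fun y => f (y / c) * Real.exp (-y)) 0 hc
  simp only [mul_zero, smul_eq_mul] at h
  rw [← h]
  apply setIntegral_congr_fun measurableSet_Ioi
  intro x _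
  simp [mul_div_cancel_left₀ _ (ne_of_gt hc)]

/-- Delta sequence property: for every bounded measurable `f` continuous at `0`,
`∫_ℝ f(x) S_n(x) dx → f(0)`. -/
theorem delta_sequence (f : ℝ → ℝ) (hf : Measurable f)
    (hbd : ∃ C : ℝ, ∀ x : ℝ, |f x| ≤ C) (hcont : ContinuousAt f 0) :
    Tendsto (fun n : ℕ => ∫ x : ℝ, f x * Sseq n x) atTop (nhds (f 0)) := by
  obtain ⟨C, hC⟩ := hbd
  have hC0 : 0 ≤ C := le_trans (abs_nonneg _) (hC 0)
  -- A n = ∫ f(y/n) e^{-y}, B n = n⁻¹ ∫ f(y/n²) e^{-y}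
  set A : ℕ → ℝ := fun n => ∫ y in Ioi (0:ℝ), f (y / n) * Real.exp (-y) with hA
  set B : ℕ → ℝ := fun n => (n:ℝ)⁻¹ * ∫ y in Ioi (0:ℝ), f (y / (n:ℝ)^2) * Real.exp (-y) with hB
  have hbound : IntegrableOn (fun y : ℝ => C * Real.exp (-y)) (Ioi 0) := by
    have : IntegrableOn (fun y : ℝ => Real.exp (-1 * y)) (Ioi 0) :=
      exp_neg_integrableOn_Ioi 0 one_pos
    have h2 := this.const_mul C
    simp only [neg_mul, one_mul] at h2
    exact h2
  -- eventually, the integral equals A n - B n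
  have key : ∀ᶠ n : ℕ in atTop, ∫ x : ℝ, f x * Sseq n x = A n - B n := by
    filter_upwards [eventually_ge_atTop 1] with n hn
    have hn0 : (0:ℝ) < (n:ℝ) := by exact_mod_cast Nat.pos_of_ne_zero (by omega)
    have hn2 : (0:ℝ) < (n:ℝ)^2 := by positivity
    have h1 : ∫ x : ℝ, f x * Sseq n x
        = ∫ x in Ioi (0:ℝ), f x * ((n:ℝ) * (Real.exp (-(n:ℝ) * x) - Real.exp (-(n:ℝ)^2 * x))) := by
      rw [← integral_Ici_eq_integral_Ioi, ← integral_indicator measurableSet_Ici]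
      congr 1
      funext x
      by_cases hx : (0:ℝ) ≤ x <;> simp [Sseq, hx, indicator]
    have hint1 := delta_integrable_aux f hf C hC hn0
    have hint2 := delta_integrable_aux f hf C hC hn2
    rw [h1]
    have h2 : ∫ x in Ioi (0:ℝ), f x * ((n:ℝ) * (Real.exp (-(n:ℝ) * x) - Real.exp (-(n:ℝ)^2 * x)))
        = (n:ℝ) * ((∫ x in Ioi (0:ℝ), f x * Real.exp (-(n:ℝ) * x))
            - ∫ x in Ioi (0:ℝ), f x * Real.exp (-(n:ℝ)^2 * x)) := by
      rw [← integral_sub hint1 hint2, ← MeasureTheory.integral_const_mul]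
      apply setIntegral_congr_fun measurableSet_Ioi
      intro x _
      ring
    rw [h2, delta_cov f hn0, delta_cov f hn2, hA, hB]
    simp only
    rw [mul_sub, ← mul_assoc, ← mul_assoc, mul_inv_cancel₀ (ne_of_gt hn0), one_mul]
    congr 2
    field_simp
  -- A → f 0
  have hAlim : Tendsto A atTop (nhds (f 0)) := by
    have hconv : Tendsto A atTop (nhds (∫ y in Ioi (0:ℝ), f 0 * Real.exp (-y))) := by
      apply tendsto_integral_of_dominated_convergence (fun y => C * Real.exp (-y))
      · intro n
        exact ((hf.comp (measurable_id.div_const _)).mul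
          (Real.measurable_exp.comp measurable_neg)).aestronglyMeasurable.restrict
      · exact hbound
      · intro n
        filter_upwards with y
        rw [norm_mul, Real.norm_eq_abs, Real.norm_eq_abs, abs_of_pos (Real.exp_pos _)]
        exact mul_le_mul_of_nonneg_right (hC _) (Real.exp_pos _).le
      · filter_upwards with y
        have hy : Tendsto (fun n : ℕ => y / (n:ℝ)) atTop (nhds 0) :=
          tendsto_const_div_atTop_nhds_zero_nat y
        exact ((hcont.tendsto.comp hy).mul_const _)
    have : ∫ y in Ioi (0:ℝ), f 0 * Real.exp (-y) = f 0 := by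
      rw [MeasureTheory.integral_const_mul, integral_exp_neg_Ioi_zero, mul_one]
    rwa [this] at hconv
  -- B → 0
  have hBlim : Tendsto B atTop (nhds 0) := by
    apply squeeze_zero_norm (a := fun n : ℕ => (n:ℝ)⁻¹ * C)
    · intro n
      rw [hB]
      simp only [norm_mul, norm_inv, Real.norm_natCast]
      apply mul_le_mul_of_nonneg_left _ (by positivity)
      calc ‖∫ y in Ioi (0:ℝ), f (y / (n:ℝ)^2) * Real.exp (-y)‖
          ≤ ∫ y in Ioi (0:ℝ), C * Real.exp (-y) := by
            apply norm_integral_le_of_norm_le hbound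
            filter_upwards with y
            rw [norm_mul, Real.norm_eq_abs, Real.norm_eq_abs, abs_of_pos (Real.exp_pos _)]
            exact mul_le_mul_of_nonneg_right (hC _) (Real.exp_pos _).le
      _ = C := by rw [MeasureTheory.integral_const_mul, integral_exp_neg_Ioi_zero, mul_one]
    · have : Tendsto (fun n : ℕ => C / (n:ℝ)) atTop (nhds 0) :=
        tendsto_const_div_atTop_nhds_zero_nat C
      simpa [div_eq_mul_inv, mul_comm] using this
  have := hAlim.sub hBlim
  rw [sub_zero] at this
  exact Tendsto.congr' (key.mono fun _ h => h.symm) this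
end

section
/- Positivity of the leading coefficient for large a (inequality (2.13)): Let D > 0, c_1 > c_2 > 0 and α_1 > α_2 > 0. Then for all sufficiently large a > 0, (c_1√(a/D) - c_1 α_1 e^{-(π/2)√(D/a)·α_1})/(α_1² + a/D) - (c_2√(a/D) - c_2 α_2 e^{-(π/2)√(D/a)·α_2})/(α_2² + a/D) > 0. -/
open Real


private lemma poly_aux (b p q r S x : ℝ) (hx : 1 < x) (hSx : S < x) (hb : 0 < b)
    (h2 : p + q + r + 1 ≤ b * S) (hq : 0 ≤ q) (hr : 0 ≤ r) :
    0 < b * x ^ 3 - p * x ^ 2 - q * x - r := by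
  have hx0 : 0 < x := by linarith
  have h1 : (b * S) * x ^ 2 < b * x ^ 3 := by
    nlinarith [mul_pos (mul_pos hb (sub_pos.mpr hSx)) (pow_pos hx0 2)]
  have h2' : (p + q + r + 1) * x ^ 2 ≤ (b * S) * x ^ 2 :=
    mul_le_mul_of_nonneg_right h2 (sq_nonneg x)
  have f1 : 0 ≤ q * (x ^ 2 - x) := mul_nonneg hq (by nlinarith [sq_nonneg (x - 1)])
  have f2 : 0 ≤ r * (x ^ 2 - 1) := mul_nonneg hr (by nlinarith [sq_nonneg (x - 1)])
  nlinarith [sq_nonneg x]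

/-- Positivity of the leading coefficient of `F(h)` at `h = (π/2)√(D/a)` for all
sufficiently large `a` (inequality (2.13) of the paper). -/
theorem leading_coefficient_positive (D c₁ c₂ α₁ α₂ : ℝ) (hD : 0 < D)
    (hc : c₁ > c₂) (hc₂ : c₂ > 0) (hα : α₁ > α₂) (hα₂ : α₂ > 0) :
    ∃ A : ℝ, ∀ a : ℝ, A < a →
      0 < (c₁ * Real.sqrt (a / D) - c₁ * α₁ * Real.exp (-(π / 2) * Real.sqrt (D / a) * α₁))
            / (α₁ ^ 2 + a / D)
          - (c₂ * Real.sqrt (a / D) - c₂ * α₂ * Real.exp (-(π / 2) * Real.sqrt (D / a) * α₂))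
            / (α₂ ^ 2 + a / D) := by
  have hc₁ : 0 < c₁ := lt_trans hc₂ hc
  have hα₁ : 0 < α₁ := lt_trans hα₂ hα
  set S : ℝ := max 1 ((c₁ * α₁ + c₂ * α₁ ^ 2 + c₁ * α₁ * α₂ ^ 2 + 1) / (c₁ - c₂)) with hS
  have hS1 : 1 ≤ S := le_max_left _ _
  have hSpos : 0 < S := lt_of_lt_of_le one_pos hS1
  have hSK : c₁ * α₁ + c₂ * α₁ ^ 2 + c₁ * α₁ * α₂ ^ 2 + 1 ≤ (c₁ - c₂) * S := by
    have h := le_max_right 1 ((c₁ * α₁ + c₂ * α₁ ^ 2 + c₁ * α₁ * α₂ ^ 2 + 1) / (c₁ - c₂))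
    have hcc : 0 < c₁ - c₂ := by linarith
    calc c₁ * α₁ + c₂ * α₁ ^ 2 + c₁ * α₁ * α₂ ^ 2 + 1
        = (c₁ - c₂) * ((c₁ * α₁ + c₂ * α₁ ^ 2 + c₁ * α₁ * α₂ ^ 2 + 1) / (c₁ - c₂)) := by
          field_simp
      _ ≤ (c₁ - c₂) * S := by
          exact mul_le_mul_of_nonneg_left h hcc.le
  refine ⟨D * S ^ 2, fun a ha => ?_⟩
  have haD : S ^ 2 < a / D := by
    rw [lt_div_iff₀ hD]; linarith [ha]
  have ha0 : 0 < a / D := lt_trans (by positivity) haD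
  set s : ℝ := Real.sqrt (a / D) with hs
  have hs2 : s ^ 2 = a / D := Real.sq_sqrt ha0.le
  have hsS : S < s := by
    have := Real.sqrt_lt_sqrt (by positivity) haD
    rwa [Real.sqrt_sq hSpos.le] at this
  have hs0 : 0 < s := lt_trans hSpos hsS
  have hs1 : 1 < s := lt_of_le_of_lt hS1 hsS
  -- exponential bounds
  have haa : 0 < a := by
    have := (div_pos_iff.mp ha0)
    rcases this with ⟨h1, _⟩ | ⟨_, h2⟩
    · exact h1
    · linarith
  have hDa : 0 ≤ Real.sqrt (D / a) := Real.sqrt_nonneg _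
  have hE₁ : Real.exp (-(π / 2) * Real.sqrt (D / a) * α₁) ≤ 1 := by
    apply Real.exp_le_one_iff.mpr
    have : 0 ≤ (π / 2) * Real.sqrt (D / a) * α₁ := by positivity
    nlinarith
  have hE₂ : 0 < Real.exp (-(π / 2) * Real.sqrt (D / a) * α₂) := Real.exp_pos _
  set E₁ := Real.exp (-(π / 2) * Real.sqrt (D / a) * α₁)
  set E₂ := Real.exp (-(π / 2) * Real.sqrt (D / a) * α₂)
  have hd₁ : 0 < α₁ ^ 2 + a / D := by positivity
  have hd₂ : 0 < α₂ ^ 2 + a / D := by positivity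
  rw [div_sub_div _ _ (ne_of_gt hd₁) (ne_of_gt hd₂)]
  apply div_pos _ (mul_pos hd₁ hd₂)
  -- key polynomial inequality
  have hpoly : 0 < (c₁ - c₂) * s ^ 3 - (c₁ * α₁) * s ^ 2 - (c₂ * α₁ ^ 2) * s - c₁ * α₁ * α₂ ^ 2 :=
    poly_aux (c₁ - c₂) (c₁ * α₁) (c₂ * α₁ ^ 2) (c₁ * α₁ * α₂ ^ 2) S s hs1 hsS
      (by linarith) hSK (by positivity) (by positivity)
  rw [← hs2] at hd₁ hd₂ ⊢
  have key : (c₁ * s - c₁ * α₁) * (α₂ ^ 2 + s ^ 2) - c₂ * s * (α₁ ^ 2 + s ^ 2) > 0 := by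
    nlinarith [mul_nonneg (mul_nonneg hc₁.le (sq_nonneg α₂)) hs0.le]
  have e1 : (c₁ * s - c₁ * α₁) * (α₂ ^ 2 + s ^ 2)
      ≤ (c₁ * s - c₁ * α₁ * E₁) * (α₂ ^ 2 + s ^ 2) := by
    apply mul_le_mul_of_nonneg_right _ hd₂.le
    nlinarith [mul_pos hc₁ hα₁]
  have e2 : (c₂ * s - c₂ * α₂ * E₂) * (α₁ ^ 2 + s ^ 2) < c₂ * s * (α₁ ^ 2 + s ^ 2) := by
    apply mul_lt_mul_of_pos_right _ hd₁
    nlinarith [mul_pos (mul_pos hc₂ hα₂) hE₂]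
  linarith
end
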